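/- arXiv:1504.07553 — 5 statements merged into one kernel-verified Lean document; each statement's English description precedes it below -/
import Mathlib

section
/- (Composition) If M₁ : Xⁿ → R₁ is (ε₁, δ₁)-differentially private and M₂ : Xⁿ × R₁ → R₂ is (ε₂, δ₂)-differentially private in its first argument for every fixed value of its second argument, then the composed mechanism M(D) = M₂(D, M₁(D)) is (ε₁ + ε₂, δ₁ + δ₂)-differentially private. -/
/-- Fubini-style swap for the composed mechanism's probability. -/
lemma dp_swap_aux {R1 R2 : Type*} (N1 : R1 → ℝ) (N2 : R1 → R2 → ℝ)
    (h1pos : ∀ y1, 0 ≤ N1 y1) (h1 : HasSum N1 1)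
    (h2pos : ∀ y1 y2, 0 ≤ N2 y1 y2) (h2 : ∀ y1, HasSum (N2 y1) 1)
    (T : Set R2) :
    ∑' y2 : T, ∑' y1, N1 y1 * N2 y1 y2 = ∑' y1, N1 y1 * ∑' y2 : T, N2 y1 y2 := by
  have hfle : ∀ y1, (∑' y2 : T, N2 y1 y2) ≤ 1 := by
    intro y1
    have := Summable.tsum_subtype_le (N2 y1) T (h2pos y1) (h2 y1).summable
    rwa [(h2 y1).tsum_eq] at this
  have hfpos : ∀ y1, 0 ≤ ∑' y2 : T, N2 y1 y2 := fun y1 =>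
    tsum_nonneg (fun y2 => h2pos y1 y2)
  have hsum : Summable (fun p : R1 × T => N1 p.1 * N2 p.1 p.2) := by
    refine (summable_prod_of_nonneg (fun p => mul_nonneg (h1pos _) (h2pos _ _))).2 ⟨?_, ?_⟩
    · exact fun y1 => ((h2 y1).summable.subtype T).mul_left (N1 y1)
    · refine Summable.of_nonneg_of_le (fun y1 => tsum_nonneg fun y2 => mul_nonneg (h1pos _) (h2pos _ _)) (fun y1 => ?_) h1.summable
      show (∑' y2 : T, N1 y1 * N2 y1 y2) ≤ N1 y1
      rw [tsum_mul_left]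
      calc N1 y1 * ∑' y2 : T, N2 y1 y2 ≤ N1 y1 * 1 :=
            mul_le_mul_of_nonneg_left (hfle y1) (h1pos y1)
        _ = N1 y1 := mul_one _
  calc ∑' y2 : T, ∑' y1, N1 y1 * N2 y1 y2
      = ∑' y1, ∑' y2 : T, N1 y1 * N2 y1 y2 := Summable.tsum_comm hsum
    _ = ∑' y1, N1 y1 * ∑' y2 : T, N2 y1 y2 := by
        refine tsum_congr fun y1 => ?_
        exact tsum_mul_left

/-- Composition: if M₁ is (ε₁,δ₁)-DP and M₂(·, y₁) is (ε₂,δ₂)-DP for every fixed y₁,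
then D ↦ M₂(D, M₁(D)) is (ε₁+ε₂, δ₁+δ₂)-DP. Mechanisms are given by their probability
mass functions; `∑' y : T, M D y` is Pr[M(D) ∈ T]. -/
theorem dp_composition {X R1 R2 : Type*} (n : ℕ) (ε1 ε2 δ1 δ2 : ℝ)
    (M1 : (Fin n → X) → R1 → ℝ) (M2 : (Fin n → X) → R1 → R2 → ℝ)
    (hM1pos : ∀ D y1, 0 ≤ M1 D y1) (hM1sum : ∀ D, HasSum (M1 D) 1)
    (hM2pos : ∀ D y1 y2, 0 ≤ M2 D y1 y2) (hM2sum : ∀ D y1, HasSum (M2 D y1) 1)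
    (hdp1 : ∀ D D' : Fin n → X, (∃ i, ∀ j, j ≠ i → D j = D' j) →
      ∀ T : Set R1, ∑' y : T, M1 D y ≤ Real.exp ε1 * ∑' y : T, M1 D' y + δ1)
    (hdp2 : ∀ y1 : R1, ∀ D D' : Fin n → X, (∃ i, ∀ j, j ≠ i → D j = D' j) →
      ∀ T : Set R2, ∑' y : T, M2 D y1 y ≤ Real.exp ε2 * ∑' y : T, M2 D' y1 y + δ2) :
    ∀ D D' : Fin n → X, (∃ i, ∀ j, j ≠ i → D j = D' j) →
      ∀ T : Set R2,
        ∑' y2 : T, (∑' y1, M1 D y1 * M2 D y1 y2) ≤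
          Real.exp (ε1 + ε2) * ∑' y2 : T, (∑' y1, M1 D' y1 * M2 D' y1 y2) + (δ1 + δ2) := by
  intro D D' hadj T
  -- R1 is nonempty since M1 D sums to 1
  have hR1 : Nonempty R1 := by
    by_contra h
    rw [not_nonempty_iff] at h
    have h1 := (hM1sum D).tsum_eq
    rw [tsum_empty] at h1
    exact one_ne_zero h1.symm
  obtain ⟨y0⟩ := hR1
  -- δ's are nonnegative
  have hδ1 : 0 ≤ δ1 := by
    have := hdp1 D D' hadj ∅
    simpa [tsum_empty] using this
  have hδ2 : 0 ≤ δ2 := by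
    have := hdp2 y0 D D' hadj ∅
    simpa [tsum_empty] using this
  set f : R1 → ℝ := fun y1 => ∑' y2 : T, M2 D y1 y2 with hf
  set g : R1 → ℝ := fun y1 => ∑' y2 : T, M2 D' y1 y2 with hg
  have hfpos : ∀ y1, 0 ≤ f y1 := fun y1 => tsum_nonneg fun y2 => hM2pos D y1 y2
  have hgpos : ∀ y1, 0 ≤ g y1 := fun y1 => tsum_nonneg fun y2 => hM2pos D' y1 y2
  have hfle : ∀ y1, f y1 ≤ 1 := by
    intro y1
    have := Summable.tsum_subtype_le (M2 D y1) T (hM2pos D y1) (hM2sum D y1).summable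
    rwa [(hM2sum D y1).tsum_eq] at this
  have hfg : ∀ y1, f y1 ≤ Real.exp ε2 * g y1 + δ2 := fun y1 => hdp2 y1 D D' hadj T
  set h : R1 → ℝ := fun y1 => min 1 (Real.exp ε2 * g y1) with hh
  have hhpos : ∀ y1, 0 ≤ h y1 := fun y1 =>
    le_min zero_le_one (mul_nonneg (Real.exp_pos ε2).le (hgpos y1))
  have hhle1 : ∀ y1, h y1 ≤ 1 := fun y1 => min_le_left _ _
  have hhle : ∀ y1, h y1 ≤ Real.exp ε2 * g y1 := fun y1 => min_le_right _ _
  have hfh : ∀ y1, f y1 ≤ h y1 + δ2 := by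
    intro y1
    rcases le_total 1 (Real.exp ε2 * g y1) with hc | hc
    · have : h y1 = 1 := min_eq_left hc
      rw [this]
      linarith [hfle y1]
    · have : h y1 = Real.exp ε2 * g y1 := min_eq_right hc
      rw [this]
      exact hfg y1
  set pos : R1 → ℝ := fun y1 => max 0 (M1 D y1 - Real.exp ε1 * M1 D' y1) with hposdef
  have hposnn : ∀ y1, 0 ≤ pos y1 := fun y1 => le_max_left _ _
  have hposle : ∀ y1, pos y1 ≤ M1 D y1 := by
    intro y1
    apply max_le (hM1pos D y1)
    have : 0 ≤ Real.exp ε1 * M1 D' y1 := mul_nonneg (Real.exp_pos ε1).le (hM1pos D' y1)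
    linarith
  -- summability facts
  have sD : Summable (M1 D) := (hM1sum D).summable
  have sD' : Summable (M1 D') := (hM1sum D').summable
  have spos : Summable pos := Summable.of_nonneg_of_le hposnn hposle sD
  have smul : ∀ (N : R1 → ℝ) (hN : Summable N) (hNp : ∀ y1, 0 ≤ N y1)
      (u : R1 → ℝ) (hu0 : ∀ y1, 0 ≤ u y1) (hu1 : ∀ y1, u y1 ≤ 1),
      Summable (fun y1 => N y1 * u y1) := by
    intro N hN hNp u hu0 hu1
    refine Summable.of_nonneg_of_le (fun y1 => mul_nonneg (hNp y1) (hu0 y1)) (fun y1 => ?_) hN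
    calc N y1 * u y1 ≤ N y1 * 1 := mul_le_mul_of_nonneg_left (hu1 y1) (hNp y1)
      _ = N y1 := mul_one _
  have sDf : Summable (fun y1 => M1 D y1 * f y1) :=
    smul _ sD (hM1pos D) f hfpos hfle
  have sDh : Summable (fun y1 => M1 D y1 * h y1) :=
    smul _ sD (hM1pos D) h hhpos hhle1
  have sD'h : Summable (fun y1 => M1 D' y1 * h y1) :=
    smul _ sD' (hM1pos D') h hhpos hhle1
  -- bound on the sum of pos
  have hpossum : ∑' y1, pos y1 ≤ δ1 := by
    set S : Set R1 := {y1 | Real.exp ε1 * M1 D' y1 < M1 D y1} with hS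
    have hind : pos = S.indicator (fun y1 => M1 D y1 - Real.exp ε1 * M1 D' y1) := by
      funext y1
      by_cases hy : y1 ∈ S
      · rw [Set.indicator_of_mem hy]
        have : Real.exp ε1 * M1 D' y1 < M1 D y1 := hy
        exact max_eq_right (by linarith)
      · rw [Set.indicator_of_notMem hy]
        have : ¬ (Real.exp ε1 * M1 D' y1 < M1 D y1) := hy
        push_neg at this
        exact max_eq_left (by linarith)
    have hrw : ∑' y1, pos y1 = (∑' y1 : S, M1 D y1) - Real.exp ε1 * ∑' y1 : S, M1 D' y1 := by
      rw [hind, ← tsum_subtype]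
      have s1 : Summable (fun x : S => M1 D (x : R1)) := sD.subtype S
      have s2 : Summable (fun x : S => Real.exp ε1 * M1 D' (x : R1)) :=
        (sD'.subtype S).mul_left (Real.exp ε1)
      rw [Summable.tsum_sub s1 s2, tsum_mul_left]
    rw [hrw]
    have := hdp1 D D' hadj S
    linarith
  -- pointwise bound
  have hpoint : ∀ y1, M1 D y1 * h y1 ≤ Real.exp ε1 * M1 D' y1 * h y1 + pos y1 := by
    intro y1
    have h1 : M1 D y1 ≤ Real.exp ε1 * M1 D' y1 + pos y1 := by
      have := le_max_right 0 (M1 D y1 - Real.exp ε1 * M1 D' y1)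
      linarith
    calc M1 D y1 * h y1 ≤ (Real.exp ε1 * M1 D' y1 + pos y1) * h y1 :=
          mul_le_mul_of_nonneg_right h1 (hhpos y1)
      _ = Real.exp ε1 * M1 D' y1 * h y1 + pos y1 * h y1 := by ring
      _ ≤ Real.exp ε1 * M1 D' y1 * h y1 + pos y1 := by
          have : pos y1 * h y1 ≤ pos y1 := by
            calc pos y1 * h y1 ≤ pos y1 * 1 :=
                  mul_le_mul_of_nonneg_left (hhle1 y1) (hposnn y1)
              _ = pos y1 := mul_one _
          linarith
  -- main chain
  have hswapD := dp_swap_aux (M1 D) (M2 D) (hM1pos D) (hM1sum D) (hM2pos D) (hM2sum D) T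
  have hswapD' := dp_swap_aux (M1 D') (M2 D') (hM1pos D') (hM1sum D') (hM2pos D') (hM2sum D') T
  rw [hswapD, hswapD']
  have step1 : ∑' y1, M1 D y1 * f y1 ≤ (∑' y1, M1 D y1 * h y1) + δ2 := by
    have : ∑' y1, M1 D y1 * f y1 ≤ ∑' y1, (M1 D y1 * h y1 + M1 D y1 * δ2) := by
      refine Summable.tsum_le_tsum (fun y1 => ?_) sDf (sDh.add (sD.mul_right δ2))
      calc M1 D y1 * f y1 ≤ M1 D y1 * (h y1 + δ2) :=
            mul_le_mul_of_nonneg_left (hfh y1) (hM1pos D y1)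
        _ = M1 D y1 * h y1 + M1 D y1 * δ2 := by ring
    rw [Summable.tsum_add sDh (sD.mul_right δ2), tsum_mul_right, (hM1sum D).tsum_eq, one_mul] at this
    exact this
  have step2 : ∑' y1, M1 D y1 * h y1 ≤ Real.exp ε1 * (∑' y1, M1 D' y1 * h y1) + δ1 := by
    have : ∑' y1, M1 D y1 * h y1 ≤ ∑' y1, (Real.exp ε1 * M1 D' y1 * h y1 + pos y1) := by
      refine Summable.tsum_le_tsum hpoint sDh ?_
      have : (fun y1 => Real.exp ε1 * M1 D' y1 * h y1) = fun y1 => Real.exp ε1 * (M1 D' y1 * h y1) := by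
        funext y1; ring
      exact (this ▸ (sD'h.mul_left (Real.exp ε1))).add spos
    have heq : (fun y1 => Real.exp ε1 * M1 D' y1 * h y1) = fun y1 => Real.exp ε1 * (M1 D' y1 * h y1) := by
      funext y1; ring
    rw [Summable.tsum_add (heq ▸ sD'h.mul_left (Real.exp ε1)) spos, heq, tsum_mul_left] at this
    linarith [hpossum]
  have step3 : ∑' y1, M1 D' y1 * h y1 ≤ Real.exp ε2 * ∑' y1, M1 D' y1 * g y1 := by
    have : ∑' y1, M1 D' y1 * h y1 ≤ ∑' y1, (Real.exp ε2 * (M1 D' y1 * g y1)) := by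
      refine Summable.tsum_le_tsum (fun y1 => ?_) sD'h ((smul _ sD' (hM1pos D') g hgpos ?_).mul_left _)
      · calc M1 D' y1 * h y1 ≤ M1 D' y1 * (Real.exp ε2 * g y1) :=
            mul_le_mul_of_nonneg_left (hhle y1) (hM1pos D' y1)
          _ = Real.exp ε2 * (M1 D' y1 * g y1) := by ring
      · intro y1
        have := Summable.tsum_subtype_le (M2 D' y1) T (hM2pos D' y1) (hM2sum D' y1).summable
        rwa [(hM2sum D' y1).tsum_eq] at this
    rwa [tsum_mul_left] at this
  have hexp : Real.exp (ε1 + ε2) = Real.exp ε1 * Real.exp ε2 := Real.exp_add ε1 ε2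
  calc ∑' y1, M1 D y1 * f y1 ≤ (∑' y1, M1 D y1 * h y1) + δ2 := step1
    _ ≤ (Real.exp ε1 * (∑' y1, M1 D' y1 * h y1) + δ1) + δ2 := by linarith [step2]
    _ ≤ (Real.exp ε1 * (Real.exp ε2 * ∑' y1, M1 D' y1 * g y1) + δ1) + δ2 := by
        have := mul_le_mul_of_nonneg_left step3 (Real.exp_pos ε1).le
        linarith
    _ = Real.exp (ε1 + ε2) * ∑' y1, M1 D' y1 * g y1 + (δ1 + δ2) := by
        rw [hexp]; ring
end

section
/- For all 0 < ε ≤ 1 and integers n ≥ 2m ≥ 2: ln((1 + (e^ε − 1)/n) / (1 + (e^{−ε} − 1)/n)) · m ≤ 6εm/n. -/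
/-- Privacy amplification by subsampling, effective epsilon:
for 0 < ε ≤ 1 and n ≥ 2m ≥ 2,
m·ln((1 + (e^ε − 1)/n)/(1 + (e^{−ε} − 1)/n)) ≤ 6εm/n. -/
theorem subsample_epsilon_bound (ε : ℝ) (hε0 : 0 < ε) (hε1 : ε ≤ 1)
    (m n : ℕ) (hm : 1 ≤ m) (hn : 2 * m ≤ n) :
    Real.log ((1 + (Real.exp ε - 1) / n) / (1 + (Real.exp (-ε) - 1) / n)) * m ≤
      6 * ε * m / n := by
  have hn2 : (2:ℝ) ≤ n := by
    have h : 2 ≤ n := le_trans (by omega) hn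
    exact_mod_cast h
  have hnpos : (0:ℝ) < n := by linarith
  have hm0 : (0:ℝ) ≤ m := Nat.cast_nonneg m
  have he1 : 1 ≤ Real.exp ε := Real.one_le_exp hε0.le
  have he3 : Real.exp ε ≤ 3 := by
    have h1 : Real.exp ε ≤ Real.exp 1 := Real.exp_le_exp.mpr hε1
    have h2 := Real.exp_one_lt_d9
    linarith
  have hlow : 1 - ε ≤ Real.exp (-ε) := by
    have := Real.add_one_le_exp (-ε); linarith
  have hexpneg : Real.exp (-ε) ≤ 1 := by
    have h : Real.exp (-ε) ≤ Real.exp 0 := Real.exp_le_exp.mpr (by linarith)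
    simpa using h
  set A := 1 + (Real.exp ε - 1)/(n:ℝ) with hAdef
  set B := 1 + (Real.exp (-ε) - 1)/(n:ℝ) with hBdef
  clear_value A B
  have hA1 : 1 ≤ A := by
    have h : 0 ≤ (Real.exp ε - 1)/(n:ℝ) := div_nonneg (by linarith) hnpos.le
    rw [hAdef]; linarith
  have hBhalf : 1/2 ≤ B := by
    have hx : -(1:ℝ)/2 ≤ (Real.exp (-ε) - 1)/(n:ℝ) := by
      rw [div_le_div_iff₀ (by norm_num) hnpos]
      nlinarith
    rw [hBdef]; linarith
  have hBpos : 0 < B := lt_of_lt_of_le (by norm_num) hBhalf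
  have hApos : 0 < A := by linarith
  -- bound on log A
  have hexp_le : Real.exp ε - 1 ≤ 3 * ε := by
    have hmul := mul_le_mul_of_nonneg_right hlow (Real.exp_pos ε).le
    rw [← Real.exp_add] at hmul
    simp at hmul
    nlinarith
  have hlogA : Real.log A ≤ 3 * ε / n := by
    have h1 : Real.log A ≤ A - 1 := Real.log_le_sub_one_of_pos hApos
    have h2 : A - 1 = (Real.exp ε - 1)/(n:ℝ) := by rw [hAdef]; ring
    have h3 : (Real.exp ε - 1)/(n:ℝ) ≤ 3 * ε / n := by gcongr
    linarith [h2 ▸ h1]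
  -- bound on -log B
  have hlogB : -Real.log B ≤ 2 * ε / n := by
    have h1 : Real.log B⁻¹ ≤ B⁻¹ - 1 :=
      Real.log_le_sub_one_of_pos (inv_pos.mpr hBpos)
    rw [Real.log_inv] at h1
    have hBB : B * B⁻¹ = 1 := mul_inv_cancel₀ (ne_of_gt hBpos)
    have hBinv0 : 0 ≤ B⁻¹ := (inv_pos.mpr hBpos).le
    have h1Beq : 1 - B = (1 - Real.exp (-ε))/(n:ℝ) := by
      rw [hBdef]; field_simp; ring
    have h1B : 1 - B ≤ ε / n := by
      rw [h1Beq]; gcongr; linarith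
    have h1B0 : 0 ≤ 1 - B := by
      rw [h1Beq]; exact div_nonneg (by linarith) hnpos.le
    have hBinv2 : B⁻¹ ≤ 2 := by nlinarith
    have hεn : 0 ≤ ε / (n:ℝ) := div_nonneg hε0.le hnpos.le
    have hprod : (1 - B) * B⁻¹ ≤ (ε / n) * 2 := mul_le_mul h1B hBinv2 hBinv0 hεn
    have key : B⁻¹ - 1 = (1 - B) * B⁻¹ := by field_simp
    have h2 : -Real.log B ≤ ε / (n:ℝ) * 2 := ((h1.trans (le_of_eq key)).trans hprod)
    have h3 : ε / (n:ℝ) * 2 = 2 * ε / (n:ℝ) := by ring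
    linarith [h2, h3]
  have hlog : Real.log (A / B) ≤ 6 * ε / n := by
    rw [Real.log_div (ne_of_gt hApos) (ne_of_gt hBpos)]
    have h6 : 3 * ε / n + 2 * ε / n ≤ 6 * ε / n := by
      rw [← add_div]; gcongr <;> linarith
    linarith
  calc Real.log (A / B) * m ≤ (6 * ε / n) * m :=
        mul_le_mul_of_nonneg_right hlog hm0
    _ = 6 * ε * m / n := by ring
end

section
/- (Impossibility of pure-private learning of points with a countable hypothesis class, key claim) Let X be an infinite set and B a finite set of functions h : X → {0,1}. Then there exist distinct x, x' ∈ X such that every h ∈ B with h(x) = 1 also satisfies h(x') = 1. Consequently, for the point function c_x (c_x(y)=1 iff y=x) and the uniform distribution D on {x, x'}, every h ∈ B satisfies Pr_{y∼D}[c_x(y) = h(y)] ≤ 1/2. -/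
/-- For an infinite set X and a finite set B of hypotheses h : X → Bool, there exist
distinct x, x' ∈ X such that every h ∈ B with h(x) = 1 also has h(x') = 1; consequently,
for the point function c_x and the uniform distribution on {x, x'}, every h ∈ B agrees
with c_x with probability at most 1/2. -/
theorem points_hard_pair {X : Type*} [DecidableEq X] [Infinite X]
    (B : Finset (X → Bool)) :
    ∃ x x' : X, x ≠ x' ∧ (∀ h ∈ B, h x = true → h x' = true) ∧
      ∀ h ∈ B,
        (((if h x = (if x = x then true else false) then (1 : ℝ) else 0) +
          (if h x' = (if x' = x then true else false) then (1 : ℝ) else 0)) / 2) ≤ 1 / 2 := by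
  obtain ⟨x, x', hne, heq⟩ := Finite.exists_ne_map_eq_of_infinite
    (fun x : X => fun h : B => (h : X → Bool) x)
  have htrace : ∀ h ∈ B, h x = h x' := fun h hh => congrFun heq ⟨h, hh⟩
  refine ⟨x, x', hne, fun h hh hx => (htrace h hh) ▸ hx, fun h hh => ?_⟩
  by_cases hx : h x = true
  · have hx' : h x' = true := htrace h hh ▸ hx
    simp [hx, hx', Ne.symm hne]
  · have hx0 : h x = false := by simpa using hx
    simp only [hx0, Ne.symm hne, if_true, if_false]
    clear heq
    split <;> split
    · exact absurd (by assumption : false = true) (by simp)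
    · norm_num
    · norm_num
    · norm_num
end

section
/- (Packing argument) Let M : Yⁿ → H be (ε, 0)-differentially private, let D₀ ∈ Yⁿ be a fixed database, and let G₁, G₂, … be pairwise disjoint subsets of H. If for each i there exists a database R_i ∈ Yⁿ with Pr[M(R_i) ∈ G_i] ≥ 1/2, then Pr[M(D₀) ∈ G_i] ≥ (1/2)e^{−εn} for every i. In particular there can be at most 2e^{εn} such sets G_i, so the sequence cannot be infinite. -/
/-- Packing argument: if M : Yⁿ → H is (ε,0)-DP, D₀ is a fixed database, the sets G_i ⊆ H
are pairwise disjoint, and for each i some database R_i has Pr[M(R_i) ∈ G_i] ≥ 1/2, then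
Pr[M(D₀) ∈ G_i] ≥ (1/2)e^{−εn} for every i; in particular the index family is finite. -/
theorem packing_argument {Y H ι : Type*} (n : ℕ) (ε : ℝ) (hε : 0 ≤ ε)
    (M : (Fin n → Y) → H → ℝ)
    (hM0 : ∀ D h, 0 ≤ M D h) (hM1 : ∀ D, HasSum (M D) 1)
    (hdp : ∀ D D' : Fin n → Y, (∃ i, ∀ j, j ≠ i → D j = D' j) →
      ∀ T : Set H, ∑' h : T, M D h ≤ Real.exp ε * ∑' h : T, M D' h)
    (D0 : Fin n → Y) (G : ι → Set H)
    (hdisj : Pairwise (Function.onFun Disjoint G))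
    (hR : ∀ i, ∃ R : Fin n → Y, 1 / 2 ≤ ∑' h : G i, M R h) :
    (∀ i, 1 / 2 * Real.exp (-(ε * n)) ≤ ∑' h : G i, M D0 h) ∧ Finite ι := by
  have hsumm : ∀ D, Summable (M D) := fun D => (hM1 D).summable
  -- chaining: from any R to D0
  have key : ∀ (T : Set H) (R : Fin n → Y),
      (∑' h : T, M R h) ≤ Real.exp (ε * n) * ∑' h : T, M D0 h := by
    intro T R
    set Dh : ℕ → (Fin n → Y) := fun k j => if (j : ℕ) < k then D0 j else R j with hDh
    have step : ∀ k, k < n →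
        (∑' h : T, M (Dh k) h) ≤ Real.exp ε * ∑' h : T, M (Dh (k+1)) h := by
      intro k hk
      refine hdp _ _ ⟨⟨k, hk⟩, fun j hj => ?_⟩ T
      have hne : (j : ℕ) ≠ k := fun h => hj (Fin.ext h)
      have : ((j : ℕ) < k) ↔ ((j : ℕ) < k + 1) := by omega
      simp only [hDh, this]
    have main : ∀ k, k ≤ n →
        (∑' h : T, M (Dh 0) h) ≤ Real.exp (ε * k) * ∑' h : T, M (Dh k) h := by
      intro k
      induction k with
      | zero => intro _; simp
      | succ k ih =>
        intro hk
        have h1 := ih (Nat.le_of_succ_le hk)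
        have h2 := step k hk
        calc (∑' h : T, M (Dh 0) h) ≤ Real.exp (ε * k) * ∑' h : T, M (Dh k) h := h1
          _ ≤ Real.exp (ε * k) * (Real.exp ε * ∑' h : T, M (Dh (k+1)) h) :=
              mul_le_mul_of_nonneg_left h2 (Real.exp_nonneg _)
          _ = Real.exp (ε * ((k : ℝ) + 1)) * ∑' h : T, M (Dh (k+1)) h := by
              rw [← mul_assoc, ← Real.exp_add]; ring_nf
          _ = Real.exp (ε * ((k + 1 : ℕ) : ℝ)) * ∑' h : T, M (Dh (k+1)) h := by
              push_cast; ring_nf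
    have h0 : Dh 0 = R := by funext j; simp [hDh]
    have hn : Dh n = D0 := by funext j; simp [hDh, j.isLt]
    have := main n le_rfl
    rwa [h0, hn] at this
  have hlow : ∀ i, 1 / 2 * Real.exp (-(ε * n)) ≤ ∑' h : G i, M D0 h := by
    intro i
    obtain ⟨R, hRi⟩ := hR i
    have h1 : (1:ℝ) / 2 ≤ Real.exp (ε * n) * ∑' h : G i, M D0 h :=
      le_trans hRi (key (G i) R)
    have hpos : 0 < Real.exp (ε * n) := Real.exp_pos _
    rw [Real.exp_neg, mul_comm (1/2 : ℝ), ← div_eq_inv_mul, div_le_iff₀ hpos]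
    linarith [h1]
  refine ⟨hlow, ?_⟩
  -- finiteness
  have hbound : ∀ s : Finset ι, (∑ i ∈ s, ∑' h : G i, M D0 h) ≤ 1 := by
    intro s
    have hind : ∀ i : ι, Summable ((G i).indicator (M D0)) :=
      fun i => (hsumm D0).indicator _
    have heq : (∑ i ∈ s, ∑' h : G i, M D0 h)
        = ∑' h, ∑ i ∈ s, (G i).indicator (M D0) h := by
      rw [Summable.tsum_finsetSum (fun i _ => hind i)]
      exact Finset.sum_congr rfl fun i _ => tsum_subtype _ _
    rw [heq, ← (hM1 D0).tsum_eq]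
    refine Summable.tsum_le_tsum ?_ (summable_sum fun i _ => hind i) (hsumm D0)
    intro h
    by_cases hh : ∃ i ∈ s, h ∈ G i
    · obtain ⟨i0, hi0s, hi0⟩ := hh
      have : ∑ i ∈ s, (G i).indicator (M D0) h = (G i0).indicator (M D0) h := by
        refine Finset.sum_eq_single_of_mem i0 hi0s fun j hjs hji => ?_
        exact Set.indicator_of_notMem
          (fun hjG => Set.disjoint_left.mp (hdisj hji) hjG hi0) _
      rw [this, Set.indicator_of_mem hi0]
    · push_neg at hh
      rw [Finset.sum_eq_zero fun i hi => Set.indicator_of_notMem (hh i hi) _]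
      exact hM0 D0 h
  by_contra hinf
  rw [not_finite_iff_infinite] at hinf
  obtain ⟨N, hN⟩ := exists_nat_gt (2 * Real.exp (ε * n))
  set f := Infinite.natEmbedding ι with hf
  have hb := hbound ((Finset.range N).map f)
  rw [Finset.sum_map] at hb
  have hlb : (N : ℝ) * (1 / 2 * Real.exp (-(ε * n))) ≤ 1 := by
    calc (N : ℝ) * (1 / 2 * Real.exp (-(ε * n)))
        = ∑ _k ∈ Finset.range N, (1 / 2 * Real.exp (-(ε * n))) := by
          rw [Finset.sum_const, Finset.card_range, nsmul_eq_mul]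
      _ ≤ ∑ k ∈ Finset.range N, ∑' h : G (f k), M D0 h :=
          Finset.sum_le_sum fun k _ => hlow (f k)
      _ ≤ 1 := hb
  have hexp : Real.exp (-(ε * n)) * Real.exp (ε * n) = 1 := by
    rw [← Real.exp_add]; simp
  nlinarith [Real.exp_pos (ε * n), Real.exp_pos (-(ε * n)), hN, hlb]
end

section
/- (DP lower bound from fingerprinting codes) Let ε ≤ 1, δ ≤ 1/(12n), γ ≤ 1/2, ξ ≤ 1/(33n). Suppose (Gen, Trace) is an interior point fingerprinting code for n users over X with completeness error γ and soundness error ξ. Then there is no (ε, δ)-differentially private algorithm A : X^{n−1} → X that solves the interior point problem on databases of size n−1 with success probability at least 2/3. -/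
/-- DP lower bound from interior point fingerprinting codes. Suppose ε ≤ 1, δ ≤ 1/(12n),
γ ≤ 1/2, ξ ≤ 1/(33n), and (Gen, Trace) is an interior point fingerprinting code for n users
over X with completeness error γ and soundness error ξ — modeled by a joint distribution ρ
over pairs (codebook, trace function). Then there is no (ε, δ)-differentially private
algorithm A : X^{n−1} → X that solves the interior point problem on databases of size n−1
with success probability at least 2/3. -/
theorem dp_lower_bound_from_fpc {X : Type*} [Fintype X] [LinearOrder X]
    (n : ℕ) (hn : 2 ≤ n) (ε δ γ ξ : ℝ)
    (hε0 : 0 ≤ ε) (hε : ε ≤ 1) (hδ0 : 0 ≤ δ) (hδ : δ ≤ 1 / (12 * n))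
    (hγ0 : 0 ≤ γ) (hγ : γ ≤ 1 / 2) (hξ0 : 0 ≤ ξ) (hξ : ξ ≤ 1 / (33 * n))
    (ρ : (Fin n → X) × (X → Option (Fin n)) → ℝ)
    (hρ0 : ∀ p, 0 ≤ ρ p) (hρ1 : ∑ p, ρ p = 1)
    (complete : ∀ (T : Finset (Fin n)) (hT : T.Nonempty)
      (A : ({i // i ∈ T} → X) → X → ℝ),
      (∀ c, (∀ x, 0 ≤ A c x) ∧ ∑ x, A c x = 1) →
      ∑ p : (Fin n → X) × (X → Option (Fin n)), ρ p *
        ∑ x, A (fun i => p.1 i.1) x *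
          (if p.2 x = none ∧ T.inf' hT p.1 ≤ x ∧ x ≤ T.sup' hT p.1 then (1 : ℝ) else 0) ≤ γ)
    (sound : ∀ (T : Finset (Fin n)) (hT : T.Nonempty)
      (A : ({i // i ∈ T} → X) → X → ℝ),
      (∀ c, (∀ x, 0 ≤ A c x) ∧ ∑ x, A c x = 1) →
      ∑ p : (Fin n → X) × (X → Option (Fin n)), ρ p *
        ∑ x, A (fun i => p.1 i.1) x *
          (if ∃ i, p.2 x = some i ∧ i ∉ T then (1 : ℝ) else 0) ≤ ξ) :
    ¬ ∃ Adp : (Fin (n - 1) → X) → X → ℝ,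
      (∀ D, (∀ x, 0 ≤ Adp D x) ∧ ∑ x, Adp D x = 1) ∧
      (∀ D D' : Fin (n - 1) → X, (∃ i, ∀ j, j ≠ i → D j = D' j) →
        ∀ T : Finset X, ∑ x ∈ T, Adp D x ≤ Real.exp ε * ∑ x ∈ T, Adp D' x + δ) ∧
      (∀ D : Fin (n - 1) → X, 2 / 3 ≤ ∑ x, Adp D x *
        (if Finset.univ.inf' (⟨⟨0, by omega⟩, Finset.mem_univ _⟩ : (Finset.univ : Finset (Fin (n - 1))).Nonempty) D ≤ x ∧
            x ≤ Finset.univ.sup' (⟨⟨0, by omega⟩, Finset.mem_univ _⟩ : (Finset.univ : Finset (Fin (n - 1))).Nonempty) D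
          then (1 : ℝ) else 0)) := by
  rintro ⟨Adp, hAnorm, hdp, hsucc⟩
  have hnpos : (0:ℝ) < n := by positivity
  have hm : 0 < n - 1 := by omega
  have : NeZero n := ⟨by omega⟩
  -- embedding of Fin (n-1) into Fin n
  set em : Fin (n-1) → Fin n := fun j => Fin.castLE (Nat.sub_le n 1) j with hem
  set lst : Fin n := ⟨n-1, by omega⟩ with hlst
  have hlstval : (lst : ℕ) = n - 1 := rfl
  have hemval : ∀ j : Fin (n-1), ((em j : Fin n) : ℕ) = (j : ℕ) := fun j => rfl
  -- databases
  set Dmap : (Fin n → X) → Fin (n-1) → X := fun c j => c (em j) with hDmap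
  set D'map : Fin n → (Fin n → X) → Fin (n-1) → X :=
    fun i c j => if em j = i then c lst else c (em j) with hD'map
  -- trace probabilities
  set q : Fin n → ℝ := fun i => ∑ p : (Fin n → X) × (X → Option (Fin n)), ρ p *
      ∑ x, Adp (Dmap p.1) x * (if p.2 x = some i then (1:ℝ) else 0) with hqdef
  -- Step 1: each q i is small
  have hq_bound : ∀ i : Fin n, q i ≤ Real.exp ε * ξ + δ := by
    intro i
    -- soundness applied to coalition univ.erase i
    have hT : (Finset.univ.erase i).Nonempty := by
      have : Nontrivial (Fin n) := Fin.nontrivial_iff_two_le.mpr hn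
      obtain ⟨k, hk⟩ := exists_ne i
      exact ⟨k, Finset.mem_erase.2 ⟨hk, Finset.mem_univ _⟩⟩
    have hlst_mem : ∀ j : Fin (n-1), em j = i → lst ∈ Finset.univ.erase i := by
      intro j h
      refine Finset.mem_erase.2 ⟨?_, Finset.mem_univ _⟩
      have h1 : (i : ℕ) = (j : ℕ) := by rw [← h]; exact hemval j
      have h2 := j.isLt
      exact fun hc => by rw [hc] at hlstval; omega
    have hem_mem : ∀ j : Fin (n-1), ¬ em j = i → em j ∈ Finset.univ.erase i :=
      fun j h => Finset.mem_erase.2 ⟨h, Finset.mem_univ _⟩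
    set B : ({k // k ∈ Finset.univ.erase i} → X) → X → ℝ :=
      fun c x => Adp (fun j => if h : em j = i then c ⟨lst, hlst_mem j h⟩
                               else c ⟨em j, hem_mem j h⟩) x with hB
    have hBnorm : ∀ c, (∀ x, 0 ≤ B c x) ∧ ∑ x, B c x = 1 := fun c => hAnorm _
    have hsound := sound (Finset.univ.erase i) hT B hBnorm
    -- rewrite the soundness bound into a statement about D'map
    have hsound' : ∑ p : (Fin n → X) × (X → Option (Fin n)), ρ p *
        ∑ x, Adp (D'map i p.1) x * (if p.2 x = some i then (1:ℝ) else 0) ≤ ξ := by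
      refine le_trans (le_of_eq ?_) hsound
      refine Finset.sum_congr rfl (fun p _ => ?_)
      congr 1
      refine Finset.sum_congr rfl (fun x _ => ?_)
      have hiff : (p.2 x = some i) ↔ (∃ k, p.2 x = some k ∧ k ∉ Finset.univ.erase i) := by
        constructor
        · intro h; exact ⟨i, h, by simp⟩
        · rintro ⟨k, hk1, hk2⟩
          have hk : k = i := by
            by_contra hne
            exact hk2 (Finset.mem_erase.2 ⟨hne, Finset.mem_univ _⟩)
          rwa [hk] at hk1
      rw [if_congr hiff rfl rfl] <;>
        first
          | rfl
          | (congr 2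
             funext j
             by_cases h : em j = i <;> simp [hB, hD'map, h])
    -- differential privacy transfer, pointwise in p
    have hdp' : ∀ p : (Fin n → X) × (X → Option (Fin n)),
        ∑ x, Adp (Dmap p.1) x * (if p.2 x = some i then (1:ℝ) else 0) ≤
        Real.exp ε * ∑ x, Adp (D'map i p.1) x * (if p.2 x = some i then (1:ℝ) else 0) + δ := by
      intro p
      have hnb : ∃ j₀, ∀ j, j ≠ j₀ → Dmap p.1 j = D'map i p.1 j := by
        by_cases h : (i : ℕ) < n - 1
        · refine ⟨⟨i, h⟩, fun j hj => ?_⟩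
          have hne : em j ≠ i := by
            intro hc
            have h1 : (i : ℕ) = (j : ℕ) := by rw [← hc]; exact hemval j
            exact hj (Fin.ext (show ((j : Fin (n-1)) : ℕ) = (i : ℕ) from h1.symm))
          simp [hDmap, hD'map, hne]
        · refine ⟨⟨0, hm⟩, fun j hj => ?_⟩
          have hne : em j ≠ i := by
            intro hc
            have h1 : (i : ℕ) = (j : ℕ) := by rw [← hc]; exact hemval j
            have := j.isLt; omega
          simp [hDmap, hD'map, hne]
      have hdpT := hdp (Dmap p.1) (D'map i p.1) hnb
        (Finset.univ.filter (fun x => p.2 x = some i))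
      have e1 : ∑ x ∈ Finset.univ.filter (fun x => p.2 x = some i), Adp (Dmap p.1) x
          = ∑ x, Adp (Dmap p.1) x * (if p.2 x = some i then (1:ℝ) else 0) := by
        rw [Finset.sum_filter]; simp [mul_ite]
      have e2 : ∑ x ∈ Finset.univ.filter (fun x => p.2 x = some i), Adp (D'map i p.1) x
          = ∑ x, Adp (D'map i p.1) x * (if p.2 x = some i then (1:ℝ) else 0) := by
        rw [Finset.sum_filter]; simp [mul_ite]
      rw [e1, e2] at hdpT
      exact hdpT
    calc q i ≤ ∑ p : (Fin n → X) × (X → Option (Fin n)), ρ p *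
          (Real.exp ε * ∑ x, Adp (D'map i p.1) x * (if p.2 x = some i then (1:ℝ) else 0) + δ) := by
          apply Finset.sum_le_sum
          intro p _
          exact mul_le_mul_of_nonneg_left (hdp' p) (hρ0 p)
      _ = Real.exp ε * (∑ p : (Fin n → X) × (X → Option (Fin n)), ρ p *
            ∑ x, Adp (D'map i p.1) x * (if p.2 x = some i then (1:ℝ) else 0))
          + δ * ∑ p : (Fin n → X) × (X → Option (Fin n)), ρ p := by
          rw [Finset.mul_sum, Finset.mul_sum, ← Finset.sum_add_distrib]
          exact Finset.sum_congr rfl (fun p _ => by ring)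
      _ ≤ Real.exp ε * ξ + δ := by
          rw [hρ1, mul_one]
          exact add_le_add_left (mul_le_mul_of_nonneg_left hsound' (le_of_lt (Real.exp_pos ε))) δ
  -- Step 2: the total trace probability is large
  have hTn : (Finset.univ : Finset (Fin n)).Nonempty := Finset.univ_nonempty
  have hlow : 2/3 - γ ≤ ∑ i : Fin n, q i := by
    have hcomp := complete Finset.univ hTn
      (fun c x => Adp (fun j => c ⟨em j, Finset.mem_univ _⟩) x) (fun c => hAnorm _)
    have hcomp' : ∑ p : (Fin n → X) × (X → Option (Fin n)), ρ p *
        ∑ x, Adp (Dmap p.1) x *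
          (if p.2 x = none ∧ Finset.univ.inf' hTn p.1 ≤ x ∧ x ≤ Finset.univ.sup' hTn p.1
            then (1:ℝ) else 0) ≤ γ := hcomp
    have hpoint : ∀ p : (Fin n → X) × (X → Option (Fin n)),
        (2:ℝ)/3 ≤ (∑ x, Adp (Dmap p.1) x *
            (if p.2 x = none ∧ Finset.univ.inf' hTn p.1 ≤ x ∧ x ≤ Finset.univ.sup' hTn p.1
              then (1:ℝ) else 0))
          + ∑ i : Fin n, ∑ x, Adp (Dmap p.1) x * (if p.2 x = some i then (1:ℝ) else 0) := by
      intro p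
      refine le_trans (hsucc (Dmap p.1)) ?_
      rw [Finset.sum_comm, ← Finset.sum_add_distrib]
      refine Finset.sum_le_sum (fun x _ => ?_)
      rw [← Finset.mul_sum, ← mul_add]
      refine mul_le_mul_of_nonneg_left ?_ ((hAnorm (Dmap p.1)).1 x)
      -- indicator inequality
      by_cases hx : Finset.univ.inf' (⟨⟨0, by omega⟩, Finset.mem_univ _⟩ :
            (Finset.univ : Finset (Fin (n-1))).Nonempty) (Dmap p.1) ≤ x ∧
          x ≤ Finset.univ.sup' (⟨⟨0, by omega⟩, Finset.mem_univ _⟩ :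
            (Finset.univ : Finset (Fin (n-1))).Nonempty) (Dmap p.1)
      · rw [if_pos hx]
        have hxn : Finset.univ.inf' hTn p.1 ≤ x ∧ x ≤ Finset.univ.sup' hTn p.1 := by
          constructor
          · refine le_trans ?_ hx.1
            exact Finset.le_inf' _ _ (fun j _ => Finset.inf'_le _ (Finset.mem_univ (em j)))
          · refine le_trans hx.2 ?_
            exact Finset.sup'_le _ _ (fun j _ => Finset.le_sup' _ (Finset.mem_univ (em j)))
        rcases hop : p.2 x with _ | i₀
        · rw [if_pos ⟨rfl, hxn⟩]
          have h0 : (0:ℝ) ≤ ∑ i : Fin n, (if (none : Option (Fin n)) = some i then (1:ℝ) else 0) :=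
            Finset.sum_nonneg (fun i _ => by positivity)
          linarith
        · have hsum : ∑ i : Fin n, (if (some i₀ : Option (Fin n)) = some i then (1:ℝ) else 0) = 1 := by
            simp
          rw [hsum]
          have h0 : (0:ℝ) ≤ (if (some i₀ : Option (Fin n)) = none ∧ Finset.univ.inf' hTn p.1 ≤ x ∧
              x ≤ Finset.univ.sup' hTn p.1 then (1:ℝ) else 0) := by positivity
          linarith
      · rw [if_neg hx]
        have h1 : (0:ℝ) ≤ (if p.2 x = none ∧ Finset.univ.inf' hTn p.1 ≤ x ∧
            x ≤ Finset.univ.sup' hTn p.1 then (1:ℝ) else 0) := by positivity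
        have h2 : (0:ℝ) ≤ ∑ i : Fin n, (if p.2 x = some i then (1:ℝ) else 0) :=
          Finset.sum_nonneg (fun i _ => by positivity)
        linarith
    have h23 : (2:ℝ)/3 ≤ ∑ p : (Fin n → X) × (X → Option (Fin n)), ρ p *
        ((∑ x, Adp (Dmap p.1) x *
            (if p.2 x = none ∧ Finset.univ.inf' hTn p.1 ≤ x ∧ x ≤ Finset.univ.sup' hTn p.1
              then (1:ℝ) else 0))
          + ∑ i : Fin n, ∑ x, Adp (Dmap p.1) x * (if p.2 x = some i then (1:ℝ) else 0)) := by
      calc (2:ℝ)/3 = (∑ p : (Fin n → X) × (X → Option (Fin n)), ρ p) * (2/3) := by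
            rw [hρ1, one_mul]
        _ = ∑ p : (Fin n → X) × (X → Option (Fin n)), ρ p * (2/3) := by rw [Finset.sum_mul]
        _ ≤ _ := Finset.sum_le_sum (fun p _ => mul_le_mul_of_nonneg_left (hpoint p) (hρ0 p))
    have hsplit : ∑ p : (Fin n → X) × (X → Option (Fin n)), ρ p *
        ((∑ x, Adp (Dmap p.1) x *
            (if p.2 x = none ∧ Finset.univ.inf' hTn p.1 ≤ x ∧ x ≤ Finset.univ.sup' hTn p.1
              then (1:ℝ) else 0))
          + ∑ i : Fin n, ∑ x, Adp (Dmap p.1) x * (if p.2 x = some i then (1:ℝ) else 0))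
        = (∑ p : (Fin n → X) × (X → Option (Fin n)), ρ p *
            ∑ x, Adp (Dmap p.1) x *
              (if p.2 x = none ∧ Finset.univ.inf' hTn p.1 ≤ x ∧ x ≤ Finset.univ.sup' hTn p.1
                then (1:ℝ) else 0))
          + ∑ i : Fin n, q i := by
      simp only [mul_add, Finset.sum_add_distrib]
      congr 1
      calc ∑ p : (Fin n → X) × (X → Option (Fin n)), ρ p * ∑ i : Fin n,
            ∑ x, Adp (Dmap p.1) x * (if p.2 x = some i then (1:ℝ) else 0)
          = ∑ p : (Fin n → X) × (X → Option (Fin n)), ∑ i : Fin n, ρ p *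
            ∑ x, Adp (Dmap p.1) x * (if p.2 x = some i then (1:ℝ) else 0) :=
            Finset.sum_congr rfl (fun p _ => Finset.mul_sum _ _ _)
        _ = ∑ i : Fin n, ∑ p : (Fin n → X) × (X → Option (Fin n)), ρ p *
            ∑ x, Adp (Dmap p.1) x * (if p.2 x = some i then (1:ℝ) else 0) := Finset.sum_comm
        _ = ∑ i : Fin n, q i := rfl
    rw [hsplit] at h23
    linarith
  -- Step 3: numerics
  have hqsum : ∑ i : Fin n, q i ≤ n * (Real.exp ε * ξ + δ) := by
    calc ∑ i : Fin n, q i ≤ ∑ _i : Fin n, (Real.exp ε * ξ + δ) :=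
          Finset.sum_le_sum (fun i _ => hq_bound i)
      _ = n * (Real.exp ε * ξ + δ) := by
          rw [Finset.sum_const, Finset.card_univ, Fintype.card_fin]; ring
  have hexp : Real.exp ε ≤ 2.7182818286 := by
    calc Real.exp ε ≤ Real.exp 1 := Real.exp_le_exp.2 hε
      _ ≤ 2.7182818286 := le_of_lt Real.exp_one_lt_d9
  have hnξ : (n:ℝ) * ξ ≤ 1/33 := by
    have := mul_le_mul_of_nonneg_left hξ (le_of_lt hnpos)
    calc (n:ℝ) * ξ ≤ n * (1 / (33 * n)) := this
      _ = 1/33 := by field_simp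
  have hnδ : (n:ℝ) * δ ≤ 1/12 := by
    have := mul_le_mul_of_nonneg_left hδ (le_of_lt hnpos)
    calc (n:ℝ) * δ ≤ n * (1 / (12 * n)) := this
      _ = 1/12 := by field_simp
  have hexp0 : 0 < Real.exp ε := Real.exp_pos ε
  nlinarith [hlow, hqsum, hnξ, hnδ, hexp, hξ0, hδ0, hnpos,
    mul_le_mul_of_nonneg_left hnξ (le_of_lt hexp0)]
end
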